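/- Let λ ∈ ℂ∖{0} and let w be a complex square root of λ (w² = λ). Then sin((w + w⁻¹)/4) = 0 if and only if there exists k ∈ ℤ with λ = λ_{k,0}. Moreover, for every k ∈ ℤ and every complex square root w of λ_{k,0}, one has cos((w + w⁻¹)/4) = (−1)^k. (Thus the zeros of the vacuum monodromy entry c₀(λ) = w·sin((w+w⁻¹)/4), equivalently of Δ₀² − 4 with Δ₀(λ) = 2·cos((w+w⁻¹)/4), are exactly the points λ_{k,0}, and the values of the vacuum spectral divisor are μ_{k,0} = a₀(λ_{k,0}) = (−1)^k.) -/

import Mathlib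

open Complex

noncomputable section

/-- The lambda-coordinates `λ_{k,0}` of the vacuum spectral divisor. -/
noncomputable def lam0 (k : ℤ) : ℝ :=
  8 * Real.pi ^ 2 * (k : ℝ) ^ 2 + 4 * Real.pi * (k : ℝ) * Real.sqrt (4 * Real.pi ^ 2 * (k : ℝ) ^ 2 - 1) - 1

private lemma cos_int_pi (k : ℤ) : Complex.cos ((k : ℂ) * (Real.pi : ℂ)) = (-1 : ℂ) ^ k := by
  have h : Real.cos ((k : ℝ) * Real.pi) = (-1 : ℝ) ^ k := by
    have := Real.cos_int_mul_pi_sub 0 k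
    simpa using this
  have := congrArg (fun x : ℝ => (x : ℂ)) h
  simpa [Complex.ofReal_cos] using this

private lemma sqrt_arg_nonneg {k : ℤ} (hk : k ≠ 0) :
    0 ≤ 4 * Real.pi ^ 2 * (k : ℝ) ^ 2 - 1 := by
  have hk1 : (1 : ℝ) ≤ (k : ℝ) ^ 2 := by
    have h1 : (1 : ℤ) ≤ |k| := Int.one_le_abs hk
    have h2 : (1 : ℝ) ≤ |(k : ℝ)| := by exact_mod_cast h1
    nlinarith [_root_.sq_abs (k : ℝ)]
  nlinarith [Real.pi_gt_three]

private lemma hcast (k : ℤ) (hk : k ≠ 0) :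
    ((Real.sqrt (4 * Real.pi ^ 2 * (k : ℝ) ^ 2 - 1) : ℝ) : ℂ) ^ 2
      = 4 * (Real.pi : ℂ) ^ 2 * (k : ℂ) ^ 2 - 1 := by
  have hs2 : Real.sqrt (4 * Real.pi ^ 2 * (k : ℝ) ^ 2 - 1) ^ 2
      = 4 * Real.pi ^ 2 * (k : ℝ) ^ 2 - 1 := Real.sq_sqrt (sqrt_arg_nonneg hk)
  have := congrArg (fun x : ℝ => (x : ℂ)) hs2
  push_cast at this
  rw [← Complex.ofReal_pow, hs2]; push_cast <;> ring

private lemma key (k : ℤ) (w : ℂ) (hw : w ^ 2 = (lam0 k : ℂ)) :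
    w + w⁻¹ = 4 * (Real.pi : ℂ) * k ∨ w + w⁻¹ = -(4 * (Real.pi : ℂ) * k) := by
  by_cases hk : k = 0
  · subst hk
    have h0 : (lam0 0 : ℝ) = -1 := by
      have : Real.sqrt (4 * Real.pi ^ 2 * (0 : ℝ) ^ 2 - 1) = 0 := by
        apply Real.sqrt_eq_zero_of_nonpos; norm_num
      simp [lam0, this]
    rw [h0] at hw
    push_cast at hw
    have hwne : w ≠ 0 := by
      intro h; rw [h] at hw; norm_num at hw
    have hinv : w⁻¹ = -w := inv_eq_of_mul_eq_one_right (by linear_combination -hw)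
    left
    rw [hinv]
    push_cast
    ring
  · set sC : ℂ := ((Real.sqrt (4 * Real.pi ^ 2 * (k : ℝ) ^ 2 - 1) : ℝ) : ℂ) with hsC
    have hs2 : sC ^ 2 = 4 * (Real.pi : ℂ) ^ 2 * (k : ℂ) ^ 2 - 1 := hcast k hk
    set u : ℂ := 2 * (Real.pi : ℂ) * k + sC with hu
    set v : ℂ := 2 * (Real.pi : ℂ) * k - sC with hv
    have huv : u * v = 1 := by
      rw [hu, hv]; linear_combination -hs2
    have hu2 : u ^ 2 = (lam0 k : ℂ) := by
      rw [hu]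
      unfold lam0
      push_cast
      linear_combination hs2
    have hune : u ≠ 0 := by
      intro h; rw [h] at huv; norm_num at huv
    have huinv : u⁻¹ = v := inv_eq_of_mul_eq_one_right huv
    have hfac : (w - u) * (w + u) = 0 := by
      linear_combination hw - hu2
    rcases mul_eq_zero.mp hfac with h | h
    · left
      have hwu : w = u := by linear_combination h
      rw [hwu, huinv, hu, hv]; ring
    · right
      have hwu : w = -u := by linear_combination h
      rw [hwu]
      rw [← neg_inv, huinv, hu, hv]; ring

private lemma fwd (lam w : ℂ) (hl : lam ≠ 0) (hw : w ^ 2 = lam) (k : ℤ)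
    (h : w + w⁻¹ = 4 * (Real.pi : ℂ) * k) : ∃ m : ℤ, lam = (lam0 m : ℂ) := by
  have hwne : w ≠ 0 := by
    intro h0; rw [h0] at hw; simp at hw; exact hl hw.symm
  have hquad : w ^ 2 + 1 = 4 * (Real.pi : ℂ) * k * w := by
    have := congrArg (fun x => x * w) h
    field_simp at this
    linear_combination this
  by_cases hk : k = 0
  · refine ⟨0, ?_⟩
    have h0 : (lam0 0 : ℝ) = -1 := by
      have : Real.sqrt (4 * Real.pi ^ 2 * (0 : ℝ) ^ 2 - 1) = 0 := by
        apply Real.sqrt_eq_zero_of_nonpos; norm_num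
      simp [lam0, this]
    rw [h0]
    subst hk
    push_cast at hquad ⊢
    linear_combination hquad - hw
  · set sC : ℂ := ((Real.sqrt (4 * Real.pi ^ 2 * (k : ℝ) ^ 2 - 1) : ℝ) : ℂ) with hsC
    have hs2 : sC ^ 2 = 4 * (Real.pi : ℂ) ^ 2 * (k : ℂ) ^ 2 - 1 := hcast k hk
    have hfac : (w - (2 * (Real.pi : ℂ) * k + sC)) * (w - (2 * (Real.pi : ℂ) * k - sC)) = 0 := by
      linear_combination hquad - hs2
    rcases mul_eq_zero.mp hfac with h' | h'
    · refine ⟨k, ?_⟩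
      have hwu : w = 2 * (Real.pi : ℂ) * k + sC := by linear_combination h'
      rw [← hw, hwu]
      unfold lam0
      push_cast
      linear_combination hs2
    · refine ⟨-k, ?_⟩
      have hwu : w = 2 * (Real.pi : ℂ) * k - sC := by linear_combination h'
      rw [← hw, hwu]
      have hsame : Real.sqrt (4 * Real.pi ^ 2 * ((-k : ℤ) : ℝ) ^ 2 - 1)
          = Real.sqrt (4 * Real.pi ^ 2 * (k : ℝ) ^ 2 - 1) := by
        push_cast; ring_nf
      unfold lam0
      rw [hsame]
      push_cast
      linear_combination hs2

/-- For `λ ≠ 0` and a square root `w` of `λ`, `sin((w+w⁻¹)/4) = 0` if and only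
if `λ = λ_{k,0}` for some `k ∈ ℤ`; and for every `k ∈ ℤ` and every square root `w` of `λ_{k,0}`,
`cos((w+w⁻¹)/4) = (−1)^k`. -/
theorem vacuum_divisor_characterization :
    (∀ lam w : ℂ, lam ≠ 0 → w ^ 2 = lam →
      (Complex.sin ((w + w⁻¹) / 4) = 0 ↔ ∃ k : ℤ, lam = (lam0 k : ℂ))) ∧
    (∀ k : ℤ, ∀ w : ℂ, w ^ 2 = (lam0 k : ℂ) →
      Complex.cos ((w + w⁻¹) / 4) = (-1 : ℂ) ^ k) := by
  constructor
  · intro lam w hl hw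
    constructor
    · intro hsin
      rw [Complex.sin_eq_zero_iff] at hsin
      obtain ⟨k, hk⟩ := hsin
      refine fwd lam w hl hw k ?_
      have := congrArg (fun x => x * 4) hk
      field_simp at this ⊢
      linear_combination this
    · rintro ⟨k, rfl⟩
      rcases key k w hw with h | h
      · rw [Complex.sin_eq_zero_iff]
        exact ⟨k, by rw [h]; ring⟩
      · rw [Complex.sin_eq_zero_iff]
        exact ⟨-k, by rw [h]; push_cast; ring⟩
  · intro k w hw
    rcases key k w hw with h | h
    · rw [h]
      have : 4 * (Real.pi : ℂ) * k / 4 = (k : ℂ) * (Real.pi : ℂ) := by ring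
      rw [this, cos_int_pi]
    · rw [h]
      have : -(4 * (Real.pi : ℂ) * k) / 4 = -((k : ℂ) * (Real.pi : ℂ)) := by ring
      rw [this, Complex.cos_neg, cos_int_pi]
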